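/- Let ⟨·,·⟩ be a nondegenerate symmetric bilinear form on a finite-dimensional real vector space V, and let φ₁, φ₂ be endomorphisms of V, skew-adjoint with respect to ⟨·,·⟩, satisfying φ₁∘φ₁ = 0, φ₂∘φ₂ = 0, φ₁∘φ₂ + φ₂∘φ₁ = 0, and φ₁∘φ₂ ≠ 0. Set A := −(1/3)(A_{φ₁} + A_{φ₂}). Then A is an algebraic curvature tensor whose Jacobi operator satisfies J_A(x)∘J_A(x) = 0 for every x ∈ V, and yet A is not Jacobi–Tsankov: there exist x₁, x₂ ∈ V with J_A(x₁)∘J_A(x₂) ≠ J_A(x₂)∘J_A(x₁). -/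
import Mathlib


noncomputable section

/-- The Jacobi operator `J(x) : y ↦ 𝒜(y,x)x` of a (tri)linear curvature operator `𝒜`. -/
def jacobiOp {V : Type*} [AddCommGroup V] [Module ℝ V]
    (Aop : V →ₗ[ℝ] V →ₗ[ℝ] V →ₗ[ℝ] V) (x : V) : V →ₗ[ℝ] V where
  toFun y := Aop y x x
  map_add' y z := by simp
  map_smul' c y := by simp

/-- The polarized Jacobi operator `J(x,y) : z ↦ ½(𝒜(z,x)y + 𝒜(z,y)x)`. -/
def jacobiPol {V : Type*} [AddCommGroup V] [Module ℝ V]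
    (Aop : V →ₗ[ℝ] V →ₗ[ℝ] V →ₗ[ℝ] V) (x y : V) : V →ₗ[ℝ] V where
  toFun z := (1/2 : ℝ) • (Aop z x y + Aop z y x)
  map_add' a b := by simp [smul_add]; abel
  map_smul' c a := by simp [smul_add, smul_comm c]

/-- The algebraic curvature tensor `A_φ` attached to a skew-adjoint endomorphism `φ`:
`A_φ(x,y,z,w) = ⟨φy,z⟩⟨φx,w⟩ - ⟨φx,z⟩⟨φy,w⟩ - 2⟨φx,y⟩⟨φz,w⟩`. -/
def Aphi {V : Type*} [AddCommGroup V] [Module ℝ V] (B : LinearMap.BilinForm ℝ V)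
    (φ : V →ₗ[ℝ] V) (x y z w : V) : ℝ :=
  B (φ y) z * B (φ x) w - B (φ x) z * B (φ y) w - 2 * B (φ x) y * B (φ z) w

/-- Given skew-adjoint `φ₁, φ₂` with `φ₁² = φ₂² = 0`,
`φ₁φ₂ + φ₂φ₁ = 0` and `φ₁φ₂ ≠ 0`, the tensor `A := -(1/3)(A_{φ₁} + A_{φ₂})` is an
algebraic curvature tensor with `J_A(x)² = 0` for all `x`, which is nevertheless not
Jacobi–Tsankov. -/
theorem Aphi_sum_not_jacobiTsankov
    {V : Type*} [AddCommGroup V] [Module ℝ V] [FiniteDimensional ℝ V]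
    -- a nondegenerate symmetric bilinear form ⟨·,·⟩ on V
    (B : LinearMap.BilinForm ℝ V)
    (hBsymm : ∀ x y : V, B x y = B y x)
    (hBnd : ∀ x : V, (∀ y : V, B x y = 0) → x = 0)
    -- skew-adjoint endomorphisms φ₁, φ₂
    (φ₁ φ₂ : V →ₗ[ℝ] V)
    (hskew₁ : ∀ x y : V, B (φ₁ x) y = - B x (φ₁ y))
    (hskew₂ : ∀ x y : V, B (φ₂ x) y = - B x (φ₂ y))
    (h₁ : φ₁ ∘ₗ φ₁ = 0) (h₂ : φ₂ ∘ₗ φ₂ = 0)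
    (hanti : φ₁ ∘ₗ φ₂ + φ₂ ∘ₗ φ₁ = 0) (hne : φ₁ ∘ₗ φ₂ ≠ 0)
    -- the curvature operator of A := -(1/3)(A_{φ₁} + A_{φ₂})
    (Aop : V →ₗ[ℝ] V →ₗ[ℝ] V →ₗ[ℝ] V)
    (hchar : ∀ x y z w : V,
      B (Aop x y z) w = -(1/3 : ℝ) * (Aphi B φ₁ x y z w + Aphi B φ₂ x y z w)) :
    -- A is an algebraic curvature tensor
    (∀ x y z w : V,
      -(1/3 : ℝ) * (Aphi B φ₁ x y z w + Aphi B φ₂ x y z w)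
        = -(-(1/3 : ℝ) * (Aphi B φ₁ y x z w + Aphi B φ₂ y x z w))) ∧
    (∀ x y z w : V,
      -(1/3 : ℝ) * (Aphi B φ₁ x y z w + Aphi B φ₂ x y z w)
        = -(1/3 : ℝ) * (Aphi B φ₁ z w x y + Aphi B φ₂ z w x y)) ∧
    (∀ x y z w : V,
      -(1/3 : ℝ) * (Aphi B φ₁ x y z w + Aphi B φ₂ x y z w)
        + -(1/3 : ℝ) * (Aphi B φ₁ y z x w + Aphi B φ₂ y z x w)
        + -(1/3 : ℝ) * (Aphi B φ₁ z x y w + Aphi B φ₂ z x y w) = 0) ∧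
    -- J_A(x)² = 0 for all x
    (∀ x : V, jacobiOp Aop x ∘ₗ jacobiOp Aop x = 0) ∧
    -- A is not Jacobi–Tsankov
    (∃ x₁ x₂ : V, jacobiOp Aop x₁ ∘ₗ jacobiOp Aop x₂ ≠ jacobiOp Aop x₂ ∘ₗ jacobiOp Aop x₁) := by
  have flip₁ : ∀ a b : V, B (φ₁ a) b = - B (φ₁ b) a := fun a b => by
    rw [hskew₁, hBsymm]
  have flip₂ : ∀ a b : V, B (φ₂ a) b = - B (φ₂ b) a := fun a b => by
    rw [hskew₂, hBsymm]
  have diag₁ : ∀ a : V, B (φ₁ a) a = 0 := fun a => by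
    have := flip₁ a a; linarith
  have diag₂ : ∀ a : V, B (φ₂ a) a = 0 := fun a => by
    have := flip₂ a a; linarith
  have h₁' : ∀ v : V, φ₁ (φ₁ v) = 0 := fun v => by
    simpa using LinearMap.congr_fun h₁ v
  have h₂' : ∀ v : V, φ₂ (φ₂ v) = 0 := fun v => by
    simpa using LinearMap.congr_fun h₂ v
  have hanti' : ∀ v : V, φ₂ (φ₁ v) = - φ₁ (φ₂ v) := fun v => by
    have h := LinearMap.congr_fun hanti v
    simp only [LinearMap.add_apply, LinearMap.comp_apply, LinearMap.zero_apply] at h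
    rw [add_comm] at h
    exact eq_neg_of_add_eq_zero_left h
  have psiskew : ∀ a b : V, B (φ₁ (φ₂ a)) b = - B (φ₁ (φ₂ b)) a := by
    intro a b
    have e1 := hskew₁ (φ₂ a) b
    have e2 := hskew₂ a (φ₁ b)
    rw [hanti' b, map_neg] at e2
    have e3 := hBsymm a (φ₁ (φ₂ b))
    rw [e1, e2, e3]
    ring
  have psidiag : ∀ v : V, B (φ₁ (φ₂ v)) v = 0 := fun v => by
    have := psiskew v v; linarith
  have key : ∀ x y : V, Aop y x x = B (φ₁ y) x • φ₁ x + B (φ₂ y) x • φ₂ x := by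
    intro x y
    have hz : ∀ w : V, B (Aop y x x - (B (φ₁ y) x • φ₁ x + B (φ₂ y) x • φ₂ x)) w = 0 := by
      intro w
      simp only [map_sub, map_add, map_smul, LinearMap.sub_apply, LinearMap.add_apply,
        LinearMap.smul_apply, smul_eq_mul]
      rw [hchar y x x w]
      simp only [Aphi, diag₁, diag₂]
      ring
    exact sub_eq_zero.mp (hBnd _ hz)
  have jap : ∀ (x y : V), jacobiOp Aop x y = Aop y x x := fun _ _ => rfl
  refine ⟨?_, ?_, ?_, ?_, ?_⟩
  · intro x y z w
    simp only [Aphi]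
    rw [flip₁ y x, flip₂ y x]
    ring
  · intro x y z w
    simp only [Aphi]
    rw [flip₁ w x, flip₁ z y, flip₁ z x, flip₁ w y,
        flip₂ w x, flip₂ z y, flip₂ z x, flip₂ w y]
    ring
  · intro x y z w
    simp only [Aphi]
    rw [flip₁ z x, flip₁ y x, flip₁ z y, flip₂ z x, flip₂ y x, flip₂ z y]
    ring
  · intro x
    ext z
    simp only [LinearMap.comp_apply, LinearMap.zero_apply, jap]
    rw [key x z, key x]
    simp only [map_add, map_smul, h₁', h₂', hanti', map_neg, smul_zero, zero_add, add_zero,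
      smul_neg, psidiag, smul_eq_mul, mul_zero, neg_zero, zero_smul]
    simp [psidiag]
  · obtain ⟨a, ha⟩ : ∃ a : V, φ₁ (φ₂ a) ≠ 0 := by
      by_contra h
      push_neg at h
      exact hne (LinearMap.ext fun v => by simpa using h v)
    obtain ⟨b, hb⟩ : ∃ b : V, B (φ₁ (φ₂ a)) b ≠ 0 := by
      by_contra h
      push_neg at h
      exact ha (hBnd _ h)
    have hφ₂a : φ₂ a ≠ 0 := fun h => ha (by rw [h, map_zero])
    refine ⟨b, a, fun heq => ?_⟩
    have h := LinearMap.congr_fun heq (φ₂ a)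
    simp only [LinearMap.comp_apply, jap] at h
    have e2 : Aop (φ₂ a) a a = 0 := by
      rw [key]
      simp [psidiag, h₂']
    have e3 : Aop (φ₂ a) b b = B (φ₁ (φ₂ a)) b • φ₁ b := by
      rw [key]
      simp [h₂']
    have e4 : Aop (φ₁ b) a a = B (φ₁ (φ₂ a)) b • φ₂ a := by
      rw [key]
      simp [h₁', hanti', psiskew b a]
    rw [e2, e3] at h
    simp only [map_zero, LinearMap.zero_apply, map_smul, LinearMap.smul_apply, e4,
      smul_smul] at h
    rcases smul_eq_zero.mp h.symm with h' | h'
    · exact hb (mul_self_eq_zero.mp h')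
    · exact hφ₂a h'
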